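/- For each integer n > 1 there exists a unique x_n ∈ (0,n−1) such that the function g_n(x) = x^{1/2−H}·((n−x)^{H−1/2} − (n−1−x)^{H−1/2}) is strictly decreasing on (0,x_n) and strictly increasing on (x_n,n−1). Moreover, x_n/(n−1) → H − 1/2 as n → ∞. -/

import Mathlib

open MeasureTheory Filter Set ProbabilityTheory

noncomputable section

/-- The normalizing constant `c_H`. -/
def cH (H : ℝ) : ℝ :=
  Real.sqrt (2 * H * Real.Gamma (3 / 2 - H) / (Real.Gamma (H + 1 / 2) * Real.Gamma (2 - 2 * H)))

/-- The constant `C_H = c_H (H - 1/2)`. -/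
def CH (H : ℝ) : ℝ := cH H * (H - 1 / 2)

/-- The kernel `k_H(t,s)`. -/
def kerH (H t s : ℝ) : ℝ :=
  CH H * s ^ (1 / 2 - H) * ∫ u in s..t, u ^ (H - 1 / 2) * (u - s) ^ (H - 3 / 2)

/-- The coefficient `J_n^{(N,H)}(i)` (with volatility `σ`). -/
def JN (σ H : ℝ) (N n i : ℕ) : ℝ :=
  σ * Real.sqrt N * ∫ u in (((i : ℝ) - 1) / N)..((i : ℝ) / N),
    (kerH H ((n : ℝ) / N) u - kerH H (((n : ℝ) - 1) / N) u)

/-- The coefficient `g_n^{(N,H)}` (with volatility `σ`). -/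
def gNH (σ H : ℝ) (N n : ℕ) : ℝ :=
  σ * Real.sqrt N * ∫ u in (((n : ℝ) - 1) / N)..((n : ℝ) / N), kerH H ((n : ℝ) / N) u

/-- The rescaled coefficient `j_n^H(i)`. -/
def jH (σ H : ℝ) (n i : ℕ) : ℝ :=
  σ * CH H * ∫ x in ((i : ℝ) - 1)..(i : ℝ),
    x ^ (1 / 2 - H) *
      ∫ v in (0 : ℝ)..1, (v + n - 1) ^ (H - 1 / 2) * (v + n - 1 - x) ^ (H - 3 / 2)

/-- The rescaled coefficient `g_n^H`. -/
def gnH (σ H : ℝ) (n : ℕ) : ℝ :=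
  σ * CH H * ∫ x in ((n : ℝ) - 1)..(n : ℝ),
    x ^ (1 / 2 - H) * ((n : ℝ) - x) ^ (H - 1 / 2) *
      ∫ y in (0 : ℝ)..1, (y * ((n : ℝ) - x) + x) ^ (H - 1 / 2) * y ^ (H - 3 / 2)

/-- The constant `g_H = σ c_H / (H + 1/2)`. -/
def gH (σ H : ℝ) : ℝ := σ * cH H / (H + 1 / 2)

/-- The autocovariance `ρ_h(k)` of fBm with Hurst parameter `h`. -/
def rho (h : ℝ) (k : ℕ) : ℝ :=
  (((k : ℝ) + 1) ^ (2 * h) + ((k : ℝ) - 1) ^ (2 * h) - 2 * (k : ℝ) ^ (2 * h)) / 2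

/-- The function `φ_n^H(x) = (n-x)^{H-1/2} - (n-1-x)^{H-1/2}`. -/
def phiH (H : ℝ) (n : ℕ) (x : ℝ) : ℝ :=
  ((n : ℝ) - x) ^ (H - 1 / 2) - ((n : ℝ) - 1 - x) ^ (H - 1 / 2)

/-- The quantity `I_n(i)`. -/
def InH (H : ℝ) (n i : ℕ) : ℝ :=
  ∫ x in ((i : ℝ) - 1)..(i : ℝ), x ^ (1 / 2 - H) * phiH H n x

/-- The function `g_n(x) = x^{1/2-H} φ_n^H(x)`. -/
def gmap (H : ℝ) (n : ℕ) (x : ℝ) : ℝ := x ^ (1 / 2 - H) * phiH H n x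

/-- A point of the binary tree (encoded by the booleans `x 0, …, x (n-2)`, where `true ↦ 1` and
`false ↦ -1`) is an arbitrage point at level `n` of the `N`-period fractional binary market if
`|Y_n^{(N,H)}(x) + a_n^{(N)}| ≥ g_n^{(N,H)}`. -/
def isArb (σ H : ℝ) (a : ℝ → ℝ) (N n : ℕ) (x : ℕ → Bool) : Prop :=
  gNH σ H N n ≤
    |(∑ i ∈ Finset.range (n - 1), JN σ H N n (i + 1) * (if x i then (1 : ℝ) else -1)) +
      a ((n : ℝ) / N) / N|

/-- The cardinality `|𝒜_n^{(N,H)}|` of the set of arbitrage points at level `n`. -/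
def arbCard (σ H : ℝ) (a : ℝ → ℝ) (N n : ℕ) : ℕ :=
  {x : Fin (n - 1) → Bool |
    isArb σ H a N n (fun i => if h : i < n - 1 then x ⟨i, h⟩ else false)}.ncard

/-- The cardinality `|𝒜_𝒫^{(N,H)}|` of the set of arbitrage paths. -/
def arbPathCard (σ H : ℝ) (a : ℝ → ℝ) (N : ℕ) : ℕ :=
  {x : Fin (N - 1) → Bool | ∃ n, 1 ≤ n ∧ n ≤ N ∧
    isArb σ H a N n (fun i => if h : i < N - 1 then x ⟨i, h⟩ else false)}.ncard


/-- MVT for rpow on `[a, a+1]`. -/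
lemma rpow_mvt (a : ℝ) (ha : 0 < a) (q : ℝ) :
    ∃ c ∈ Ioo a (a + 1), (a + 1) ^ q - a ^ q = q * c ^ (q - 1) := by
  have hab : a < a + 1 := by linarith
  have hcont : ContinuousOn (fun x : ℝ => x ^ q) (Icc a (a + 1)) := by
    intro x hx
    exact (Real.continuousAt_rpow_const x q (Or.inl (by nlinarith [hx.1]))).continuousWithinAt
  have hderiv : ∀ x ∈ Ioo a (a + 1), HasDerivAt (fun x : ℝ => x ^ q) (q * x ^ (q - 1)) x := by
    intro x hx
    exact Real.hasDerivAt_rpow_const (Or.inl (by nlinarith [hx.1]))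
  obtain ⟨c, hc, hc2⟩ := exists_hasDerivAt_eq_slope (fun x : ℝ => x ^ q)
    (fun x => q * x ^ (q - 1)) hab hcont hderiv
  exact ⟨c, hc, by rw [hc2]; field_simp; ring⟩

def psiF (H : ℝ) (n : ℕ) (x : ℝ) : ℝ :=
  (H - 1 / 2) * (x * (((n : ℝ) - 1 - x) ^ (H - 3 / 2) - ((n : ℝ) - x) ^ (H - 3 / 2))
    - (((n : ℝ) - x) ^ (H - 1 / 2) - ((n : ℝ) - 1 - x) ^ (H - 1 / 2)))

/-- derivative of `x ↦ (c - x)^p` at `x < c`. -/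
lemma hasDerivAt_sub_rpow (c p x : ℝ) (h : x < c) :
    HasDerivAt (fun x => (c - x) ^ p) (-(p * (c - x) ^ (p - 1))) x := by
  have h1 : HasDerivAt (fun x : ℝ => c - x) (-1) x := by
    simpa using (hasDerivAt_id x).const_sub c
  have hne : c - x ≠ 0 := by linarith
  have h2 := (Real.hasDerivAt_rpow_const (p := p) (x := c - x) (Or.inl hne)).comp x h1
  refine h2.congr_deriv ?_
  ring

lemma hasDerivAt_phiH (H : ℝ) (n : ℕ) (x : ℝ) (hx : x < (n : ℝ) - 1) :
    HasDerivAt (phiH H n)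
      ((H - 1 / 2) * (((n : ℝ) - 1 - x) ^ (H - 3 / 2) - ((n : ℝ) - x) ^ (H - 3 / 2))) x := by
  have h1 := hasDerivAt_sub_rpow (n : ℝ) (H - 1 / 2) x (by linarith)
  have h2 := hasDerivAt_sub_rpow ((n : ℝ) - 1) (H - 1 / 2) x (by linarith)
  have := h1.sub h2
  have e3 : ((n:ℝ) - 1 - x) ^ (H - 1/2 - 1) = ((n:ℝ) - 1 - x) ^ (H - 3/2) := by
    rw [show (H - 1/2 - 1 : ℝ) = H - 3/2 by ring]
  have e4 : ((n:ℝ) - x) ^ (H - 1/2 - 1) = ((n:ℝ) - x) ^ (H - 3/2) := by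
    rw [show (H - 1/2 - 1 : ℝ) = H - 3/2 by ring]
  refine this.congr_deriv ?_
  rw [e3, e4]; ring

lemma hasDerivAt_gmap (H : ℝ) (n : ℕ) (x : ℝ) (hx0 : 0 < x) (hx : x < (n : ℝ) - 1) :
    HasDerivAt (gmap H n) (x ^ (-(1 / 2) - H) * psiF H n x) x := by
  have h1 : HasDerivAt (fun y : ℝ => y ^ (1 / 2 - H)) ((1 / 2 - H) * x ^ (1 / 2 - H - 1)) x :=
    Real.hasDerivAt_rpow_const (Or.inl hx0.ne')
  have h2 := hasDerivAt_phiH H n x hx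
  have h3 := h1.mul h2
  refine h3.congr_deriv ?_
  have e1 : x ^ (1 / 2 - H - 1) = x ^ (-(1 / 2) - H) := by rw [show (1/2 - H - 1 : ℝ) = -(1/2) - H by ring]
  have e2 : x ^ (1 / 2 - H) = x ^ (-(1 / 2) - H) * x := by
    rw [show (1/2 - H : ℝ) = (-(1/2) - H) + 1 by ring, Real.rpow_add hx0, Real.rpow_one]
  rw [psiF, phiH, e1, e2]; ring

lemma hasDerivAt_psiF (H : ℝ) (n : ℕ) (x : ℝ) (hx : x < (n : ℝ) - 1) :
    HasDerivAt (psiF H n)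
      ((H - 1 / 2) * (3 / 2 - H) *
        ((((n : ℝ) - 1 - x) ^ (H - 3 / 2) - ((n : ℝ) - x) ^ (H - 3 / 2)) +
          x * (((n : ℝ) - 1 - x) ^ (H - 5 / 2) - ((n : ℝ) - x) ^ (H - 5 / 2)))) x := by
  have hA := hasDerivAt_sub_rpow ((n : ℝ) - 1) (H - 3 / 2) x (by linarith)
  have hB := hasDerivAt_sub_rpow (n : ℝ) (H - 3 / 2) x (by linarith)
  have hC := hasDerivAt_sub_rpow (n : ℝ) (H - 1 / 2) x (by linarith)
  have hD := hasDerivAt_sub_rpow ((n : ℝ) - 1) (H - 1 / 2) x (by linarith)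
  have h := ((((hasDerivAt_id x).mul (hA.sub hB)).sub (hC.sub hD)).const_mul (H - 1 / 2))
  have he : ∀ y : ℝ, ((n : ℝ) - 1) - y = (n : ℝ) - 1 - y := fun y => by ring
  have e1 : ((n:ℝ) - 1 - x) ^ (H - 3/2 - 1) = ((n:ℝ) - 1 - x) ^ (H - 5/2) := by rw [show (H - 3/2 - 1 : ℝ) = H - 5/2 by ring]
  have e2 : ((n:ℝ) - x) ^ (H - 3/2 - 1) = ((n:ℝ) - x) ^ (H - 5/2) := by rw [show (H - 3/2 - 1 : ℝ) = H - 5/2 by ring]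
  have e3 : ((n:ℝ) - 1 - x) ^ (H - 1/2 - 1) = ((n:ℝ) - 1 - x) ^ (H - 3/2) := by rw [show (H - 1/2 - 1 : ℝ) = H - 3/2 by ring]
  have e4 : ((n:ℝ) - x) ^ (H - 1/2 - 1) = ((n:ℝ) - x) ^ (H - 3/2) := by rw [show (H - 1/2 - 1 : ℝ) = H - 3/2 by ring]
  refine h.congr_deriv ?_
  rw [e1, e2, e3, e4]; simp only [id, Pi.sub_apply]; ring

lemma contOn_psiF (H : ℝ) (n : ℕ) : ContinuousOn (psiF H n) (Ico 0 ((n : ℝ) - 1)) := by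
  have h1 : ∀ p : ℝ, ContinuousOn (fun x : ℝ => ((n : ℝ) - x) ^ p) (Ico 0 ((n : ℝ) - 1)) := by
    intro p
    apply ContinuousOn.rpow_const (continuous_const.sub continuous_id).continuousOn
    intro x hx
    exact Or.inl (by simp only [Pi.sub_apply, id]; nlinarith [hx.1, hx.2])
  have h2 : ∀ p : ℝ, ContinuousOn (fun x : ℝ => ((n : ℝ) - 1 - x) ^ p) (Ico 0 ((n : ℝ) - 1)) := by
    intro p
    apply ContinuousOn.rpow_const ((continuous_const.sub continuous_id).continuousOn)
    intro x hx
    exact Or.inl (by simp only [Pi.sub_apply, id]; nlinarith [hx.1, hx.2])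
  exact continuousOn_const.mul
    (((continuousOn_id.mul ((h2 _).sub (h1 _))).sub ((h1 _).sub (h2 _))))

lemma strictMonoOn_psiF (H : ℝ) (hH1 : 1 / 2 < H) (hH2 : H < 1) (n : ℕ) :
    StrictMonoOn (psiF H n) (Ico 0 ((n : ℝ) - 1)) := by
  apply strictMonoOn_of_deriv_pos (convex_Ico _ _) (contOn_psiF H n)
  intro x hx
  rw [interior_Ico] at hx
  obtain ⟨hx0, hxm⟩ := hx
  rw [(hasDerivAt_psiF H n x hxm).deriv]
  have hb1 : (0 : ℝ) < (n : ℝ) - 1 - x := by linarith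
  have hb2 : ((n : ℝ) - 1 - x) < (n : ℝ) - x := by linarith
  have d1 : ((n : ℝ) - x) ^ (H - 3 / 2) < ((n : ℝ) - 1 - x) ^ (H - 3 / 2) :=
    Real.rpow_lt_rpow_of_neg hb1 hb2 (by linarith)
  have d2 : ((n : ℝ) - x) ^ (H - 5 / 2) < ((n : ℝ) - 1 - x) ^ (H - 5 / 2) :=
    Real.rpow_lt_rpow_of_neg hb1 hb2 (by linarith)
  have : 0 < x * (((n : ℝ) - 1 - x) ^ (H - 5 / 2) - ((n : ℝ) - x) ^ (H - 5 / 2)) := by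
    apply mul_pos hx0; linarith
  exact mul_pos (mul_pos (by linarith) (by linarith)) (by nlinarith)

lemma psiF_zero_neg (H : ℝ) (hH1 : 1 / 2 < H) (n : ℕ) (hn : 1 < n) : psiF H n 0 < 0 := by
  have hn1 : (0 : ℝ) ≤ (n : ℝ) - 1 := by
    have : (1 : ℝ) ≤ (n : ℝ) := by exact_mod_cast hn.le
    linarith
  have : ((n : ℝ) - 1 - 0) ^ (H - 1 / 2) < ((n : ℝ) - 0) ^ (H - 1 / 2) := by
    apply Real.rpow_lt_rpow (by linarith) (by linarith) (by linarith)
  simp only [psiF, zero_mul, zero_sub]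
  nlinarith

lemma psiF_pos_point (H : ℝ) (hH1 : 1 / 2 < H) (hH2 : H < 1) (n : ℕ) (hn : 1 < n) :
    ∃ b ∈ Ioo (0 : ℝ) ((n : ℝ) - 1), 0 < psiF H n b := by
  set m : ℝ := (n : ℝ) - 1 with hm
  have hm1 : (1 : ℝ) ≤ m := by
    have : (2 : ℝ) ≤ (n : ℝ) := by exact_mod_cast hn
    simp [hm]; linarith
  have hm0 : (0 : ℝ) < m := by linarith
  set K : ℝ := 2 * (m + 2) + 1 with hK
  have hKpos : (0 : ℝ) < K := by positivity
  set δ0 : ℝ := K ^ (1 / (H - 3 / 2)) with hδ0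
  have hδ0pos : 0 < δ0 := Real.rpow_pos_of_pos hKpos _
  set δ : ℝ := min δ0 (min (1 / 2) (m / 2)) with hδ
  have hδpos : 0 < δ := lt_min hδ0pos (lt_min (by norm_num) (by linarith))
  have hδhalf : δ ≤ 1 / 2 := le_trans (min_le_right _ _) (min_le_left _ _)
  have hδm : δ ≤ m / 2 := le_trans (min_le_right _ _) (min_le_right _ _)
  have hq : H - 3 / 2 ≠ 0 := by linarith
  have hδ0K : δ0 ^ (H - 3 / 2) = K := by
    rw [hδ0, ← Real.rpow_mul hKpos.le, one_div_mul_cancel hq, Real.rpow_one]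
  set b : ℝ := m - δ with hb
  have hbmem : b ∈ Ioo (0 : ℝ) m := ⟨by simp [hb]; linarith, by simp [hb]; linarith⟩
  refine ⟨b, hbmem, ?_⟩
  have e1 : (n : ℝ) - 1 - b = δ := by simp [hb, hm]
  have e2 : (n : ℝ) - b = δ + 1 := by simp [hb, hm]; ring
  have hA1 : (δ + 1) ^ (H - 3 / 2) ≤ 1 :=
    Real.rpow_le_one_of_one_le_of_nonpos (by linarith) (by linarith)
  have hA2 : (δ + 1) ^ (H - 1 / 2) ≤ δ + 1 := by
    calc (δ + 1) ^ (H - 1 / 2) ≤ (δ + 1) ^ (1 : ℝ) :=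
          Real.rpow_le_rpow_of_exponent_le (by linarith) (by linarith)
      _ = δ + 1 := Real.rpow_one _
  have hA3 : (0 : ℝ) ≤ δ ^ (H - 1 / 2) := Real.rpow_nonneg hδpos.le _
  have hA4 : K ≤ δ ^ (H - 3 / 2) := by
    rw [← hδ0K]
    exact Real.rpow_le_rpow_of_nonpos hδpos (min_le_left _ _) (by linarith)
  have hbm : m / 2 ≤ b := by simp [hb]; linarith
  have h5 : b * (K - 1) ≤ b * (δ ^ (H - 3 / 2) - (δ + 1) ^ (H - 3 / 2)) :=
    mul_le_mul_of_nonneg_left (by linarith) (by simp [hb]; linarith)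
  have h6 : (m / 2) * (K - 1) ≤ b * (K - 1) :=
    mul_le_mul_of_nonneg_right hbm (by simp [hK]; linarith)
  rw [psiF, e1, e2]
  have hinner : 0 < b * (δ ^ (H - 3 / 2) - (δ + 1) ^ (H - 3 / 2)) -
      ((δ + 1) ^ (H - 1 / 2) - δ ^ (H - 1 / 2)) := by nlinarith
  exact mul_pos (by linarith) hinner

lemma psiF_root (H : ℝ) (hH1 : 1 / 2 < H) (hH2 : H < 1) (n : ℕ) (hn : 1 < n) :
    ∃ x ∈ Ioo (0 : ℝ) ((n : ℝ) - 1), psiF H n x = 0 := by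
  obtain ⟨b, hb, hbpos⟩ := psiF_pos_point H hH1 hH2 n hn
  have hsub : Icc (0 : ℝ) b ⊆ Ico 0 ((n : ℝ) - 1) := fun y hy => ⟨hy.1, lt_of_le_of_lt hy.2 hb.2⟩
  have hcont : ContinuousOn (psiF H n) (Icc 0 b) := (contOn_psiF H n).mono hsub
  have h0 : psiF H n 0 < 0 := psiF_zero_neg H hH1 n hn
  have := intermediate_value_Ioo (le_of_lt hb.1) hcont
  obtain ⟨x, hx, hx0⟩ := this ⟨h0, hbpos⟩
  exact ⟨x, ⟨hx.1, lt_trans hx.2 hb.2⟩, hx0⟩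

lemma psiF_sign (H : ℝ) (hH1 : 1 / 2 < H) (hH2 : H < 1) (n : ℕ)
    {r x : ℝ} (hr : r ∈ Ioo (0 : ℝ) ((n : ℝ) - 1)) (hroot : psiF H n r = 0)
    (hx : x ∈ Ioo (0 : ℝ) ((n : ℝ) - 1)) :
    (x < r → psiF H n x < 0) ∧ (r < x → 0 < psiF H n x) := by
  have hmono := strictMonoOn_psiF H hH1 hH2 n
  have hxI : x ∈ Ico (0 : ℝ) ((n : ℝ) - 1) := ⟨hx.1.le, hx.2⟩
  have hrI : r ∈ Ico (0 : ℝ) ((n : ℝ) - 1) := ⟨hr.1.le, hr.2⟩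
  constructor
  · intro h; have := hmono hxI hrI h; linarith
  · intro h; have := hmono hrI hxI h; linarith

lemma gmap_prop (H : ℝ) (hH1 : 1 / 2 < H) (hH2 : H < 1) (n : ℕ)
    {r : ℝ} (hr : r ∈ Ioo (0 : ℝ) ((n : ℝ) - 1)) (hroot : psiF H n r = 0) :
    StrictAntiOn (gmap H n) (Ioo 0 r) ∧ StrictMonoOn (gmap H n) (Ioo r ((n : ℝ) - 1)) := by
  constructor
  · apply strictAntiOn_of_deriv_neg (convex_Ioo _ _)
    · intro x hx
      exact (hasDerivAt_gmap H n x hx.1 (lt_trans hx.2 hr.2)).continuousAt.continuousWithinAt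
    · intro x hx
      rw [interior_Ioo] at hx
      have hxm : x ∈ Ioo (0 : ℝ) ((n : ℝ) - 1) := ⟨hx.1, lt_trans hx.2 hr.2⟩
      rw [(hasDerivAt_gmap H n x hx.1 hxm.2).deriv]
      have hneg := (psiF_sign H hH1 hH2 n hr hroot hxm).1 hx.2
      have : (0 : ℝ) < x ^ (-(1 / 2) - H) := Real.rpow_pos_of_pos hx.1 _
      exact mul_neg_of_pos_of_neg this hneg
  · apply strictMonoOn_of_deriv_pos (convex_Ioo _ _)
    · intro x hx
      exact (hasDerivAt_gmap H n x (lt_trans hr.1 hx.1) hx.2).continuousAt.continuousWithinAt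
    · intro x hx
      rw [interior_Ioo] at hx
      have hxm : x ∈ Ioo (0 : ℝ) ((n : ℝ) - 1) := ⟨lt_trans hr.1 hx.1, hx.2⟩
      rw [(hasDerivAt_gmap H n x hxm.1 hx.2).deriv]
      have hpos := (psiF_sign H hH1 hH2 n hr hroot hxm).2 hx.1
      exact mul_pos (Real.rpow_pos_of_pos hxm.1 _) hpos

lemma gmap_uniq_aux (H : ℝ) (n : ℕ) {x y : ℝ} (hxy : x < y)
    (hx : x ∈ Ioo (0 : ℝ) ((n : ℝ) - 1) ∧ StrictAntiOn (gmap H n) (Ioo 0 x) ∧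
      StrictMonoOn (gmap H n) (Ioo x ((n : ℝ) - 1)))
    (hy : y ∈ Ioo (0 : ℝ) ((n : ℝ) - 1) ∧ StrictAntiOn (gmap H n) (Ioo 0 y) ∧
      StrictMonoOn (gmap H n) (Ioo y ((n : ℝ) - 1))) : False := by
  have hx0 : 0 < x := hx.1.1
  have hym : y < (n : ℝ) - 1 := hy.1.2
  have hu1 : x < x + (y - x) / 3 := by linarith
  have huv : x + (y - x) / 3 < x + 2 * (y - x) / 3 := by linarith
  have hv1 : x + 2 * (y - x) / 3 < y := by linarith
  have h1 : gmap H n (x + (y - x) / 3) < gmap H n (x + 2 * (y - x) / 3) :=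
    hx.2.2 ⟨hu1, by linarith⟩ ⟨by linarith, by linarith⟩ huv
  have h2 : gmap H n (x + 2 * (y - x) / 3) < gmap H n (x + (y - x) / 3) :=
    hy.2.1 ⟨by linarith, by linarith⟩ ⟨by linarith, hv1⟩ huv
  linarith

lemma gmap_uniq (H : ℝ) (n : ℕ) {x y : ℝ}
    (hx : x ∈ Ioo (0 : ℝ) ((n : ℝ) - 1) ∧ StrictAntiOn (gmap H n) (Ioo 0 x) ∧
      StrictMonoOn (gmap H n) (Ioo x ((n : ℝ) - 1)))
    (hy : y ∈ Ioo (0 : ℝ) ((n : ℝ) - 1) ∧ StrictAntiOn (gmap H n) (Ioo 0 y) ∧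
      StrictMonoOn (gmap H n) (Ioo y ((n : ℝ) - 1))) : x = y := by
  by_contra hne
  rcases lt_or_gt_of_ne hne with h | h
  · exact gmap_uniq_aux H n h hx hy
  · exact gmap_uniq_aux H n h hy hx

/-- Rewrite `psiF` at `x` with `a := n - 1 - x`. -/
lemma psiF_eval (H : ℝ) (n : ℕ) (x a : ℝ) (ha : (n : ℝ) - 1 - x = a) :
    psiF H n x = (H - 1 / 2) * (x * (a ^ (H - 3 / 2) - (a + 1) ^ (H - 3 / 2))
      - ((a + 1) ^ (H - 1 / 2) - a ^ (H - 1 / 2))) := by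
  have hb : (n : ℝ) - x = a + 1 := by linarith
  rw [psiF, ha, hb]

/-- If the polynomial inequality holds, `ψ > 0`. -/
lemma psiF_pos_of_poly (H : ℝ) (hH1 : 1 / 2 < H) (hH2 : H < 1) (n : ℕ) (x a : ℝ)
    (ha : (n : ℝ) - 1 - x = a) (hapos : 0 < a) (hxpos : 0 < x)
    (hpoly : (H - 1 / 2) * ((a + 1) * (a + 1)) < x * (3 / 2 - H) * a) :
    0 < psiF H n x := by
  obtain ⟨c1, hc1, e1⟩ := rpow_mvt a hapos (H - 3 / 2)
  obtain ⟨c2, hc2, e2⟩ := rpow_mvt a hapos (H - 1 / 2)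
  have hc1pos : 0 < c1 := lt_trans hapos hc1.1
  have hc2pos : 0 < c2 := lt_trans hapos hc2.1
  rw [psiF_eval H n x a ha, e2]
  have e1' : a ^ (H - 3 / 2) - (a + 1) ^ (H - 3 / 2) = (3 / 2 - H) * c1 ^ (H - 3 / 2 - 1) := by
    linarith [e1]
  rw [e1']
  -- bounds on c1, c2 powers
  have hq52 : H - 3 / 2 - 1 = H - 5 / 2 := by ring
  have h1 : c2 ^ (H - 1 / 2 - 1) ≤ a ^ (H - 3 / 2) := by
    rw [show H - 1 / 2 - 1 = H - 3 / 2 by ring]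
    exact Real.rpow_le_rpow_of_nonpos hapos hc2.1.le (by linarith)
  have h2 : (a + 1) ^ (H - 5 / 2) ≤ c1 ^ (H - 3 / 2 - 1) := by
    rw [hq52]
    exact Real.rpow_le_rpow_of_nonpos hc1pos hc1.2.le (by linarith)
  -- key algebraic inequality
  have key : (H - 1 / 2) * (a ^ (H - 3 / 2) * (a + 1) ^ (5 / 2 - H)) < x * (3 / 2 - H) := by
    have eR : a ^ (H - 3 / 2) * a = a ^ (H - 1 / 2) := by
      nth_rewrite 2 [← Real.rpow_one a]
      rw [← Real.rpow_add hapos, show H - 3 / 2 + 1 = H - 1 / 2 by ring]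
    have eS : (a + 1) ^ (H - 1 / 2) * (a + 1) ^ (5 / 2 - H) = (a + 1) * (a + 1) := by
      rw [← Real.rpow_add (by linarith), show H - 1 / 2 + (5 / 2 - H) = 2 by ring,
        show (2 : ℝ) = (1 : ℝ) + 1 by norm_num, Real.rpow_add (by linarith), Real.rpow_one]
    have hRS : a ^ (H - 1 / 2) ≤ (a + 1) ^ (H - 1 / 2) :=
      Real.rpow_le_rpow hapos.le (by linarith) (by linarith)
    have hQpos : (0 : ℝ) < (a + 1) ^ (5 / 2 - H) := Real.rpow_pos_of_pos (by linarith) _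
    have hstep : (H - 1 / 2) * (a ^ (H - 3 / 2) * (a + 1) ^ (5 / 2 - H)) * a <
        x * (3 / 2 - H) * a := by
      calc (H - 1 / 2) * (a ^ (H - 3 / 2) * (a + 1) ^ (5 / 2 - H)) * a
          = (H - 1 / 2) * ((a ^ (H - 3 / 2) * a) * (a + 1) ^ (5 / 2 - H)) := by ring
        _ = (H - 1 / 2) * (a ^ (H - 1 / 2) * (a + 1) ^ (5 / 2 - H)) := by rw [eR]
        _ ≤ (H - 1 / 2) * ((a + 1) ^ (H - 1 / 2) * (a + 1) ^ (5 / 2 - H)) := by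
            apply mul_le_mul_of_nonneg_left _ (by linarith)
            exact mul_le_mul_of_nonneg_right hRS hQpos.le
        _ = (H - 1 / 2) * ((a + 1) * (a + 1)) := by rw [eS]
        _ < x * (3 / 2 - H) * a := hpoly
    exact lt_of_mul_lt_mul_right hstep hapos.le
  -- multiply key by (a+1)^(H-5/2)
  have hT : (0 : ℝ) < (a + 1) ^ (H - 5 / 2) := Real.rpow_pos_of_pos (by linarith) _
  have eQT : (a + 1) ^ (5 / 2 - H) * (a + 1) ^ (H - 5 / 2) = 1 := by
    rw [← Real.rpow_add (by linarith)]; norm_num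
  have key2 : (H - 1 / 2) * a ^ (H - 3 / 2) < x * (3 / 2 - H) * (a + 1) ^ (H - 5 / 2) := by
    have := mul_lt_mul_of_pos_right key hT
    calc (H - 1 / 2) * a ^ (H - 3 / 2)
        = (H - 1 / 2) * (a ^ (H - 3 / 2) * (a + 1) ^ (5 / 2 - H)) * (a + 1) ^ (H - 5 / 2) := by
          rw [mul_assoc, mul_assoc, eQT, mul_one]
      _ < x * (3 / 2 - H) * (a + 1) ^ (H - 5 / 2) := this
  -- conclude
  have hfin : (H - 1 / 2) * c2 ^ (H - 1 / 2 - 1) < x * ((3 / 2 - H) * c1 ^ (H - 3 / 2 - 1)) := by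
    calc (H - 1 / 2) * c2 ^ (H - 1 / 2 - 1) ≤ (H - 1 / 2) * a ^ (H - 3 / 2) :=
          mul_le_mul_of_nonneg_left h1 (by linarith)
      _ < x * (3 / 2 - H) * (a + 1) ^ (H - 5 / 2) := key2
      _ ≤ x * ((3 / 2 - H) * c1 ^ (H - 3 / 2 - 1)) := by
          rw [mul_assoc]
          apply mul_le_mul_of_nonneg_left _ hxpos.le
          exact mul_le_mul_of_nonneg_left h2 (by linarith)
  nlinarith

/-- If the reverse polynomial inequality holds, `ψ < 0`. -/
lemma psiF_neg_of_poly (H : ℝ) (hH1 : 1 / 2 < H) (hH2 : H < 1) (n : ℕ) (x a : ℝ)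
    (ha : (n : ℝ) - 1 - x = a) (hapos : 0 < a) (hxpos : 0 < x)
    (hpoly : x * (3 / 2 - H) * (a + 1) < (H - 1 / 2) * (a * a)) :
    psiF H n x < 0 := by
  obtain ⟨c1, hc1, e1⟩ := rpow_mvt a hapos (H - 3 / 2)
  obtain ⟨c2, hc2, e2⟩ := rpow_mvt a hapos (H - 1 / 2)
  have hc1pos : 0 < c1 := lt_trans hapos hc1.1
  have hc2pos : 0 < c2 := lt_trans hapos hc2.1
  rw [psiF_eval H n x a ha, e2]
  have e1' : a ^ (H - 3 / 2) - (a + 1) ^ (H - 3 / 2) = (3 / 2 - H) * c1 ^ (H - 3 / 2 - 1) := by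
    linarith [e1]
  rw [e1']
  have h1 : (a + 1) ^ (H - 3 / 2) ≤ c2 ^ (H - 1 / 2 - 1) := by
    rw [show H - 1 / 2 - 1 = H - 3 / 2 by ring]
    exact Real.rpow_le_rpow_of_nonpos hc2pos hc2.2.le (by linarith)
  have h2 : c1 ^ (H - 3 / 2 - 1) ≤ a ^ (H - 5 / 2) := by
    rw [show H - 3 / 2 - 1 = H - 5 / 2 by ring]
    exact Real.rpow_le_rpow_of_nonpos hapos hc1.1.le (by linarith)
  have key : x * (3 / 2 - H) < (H - 1 / 2) * ((a + 1) ^ (H - 3 / 2) * a ^ (5 / 2 - H)) := by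
    have eR : a ^ (5 / 2 - H) * a ^ (H - 1 / 2) = a * a := by
      rw [← Real.rpow_add hapos, show 5 / 2 - H + (H - 1 / 2) = 2 by ring,
        show (2 : ℝ) = (1 : ℝ) + 1 by norm_num, Real.rpow_add hapos, Real.rpow_one]
    have eS : (a + 1) ^ (H - 3 / 2) * (a + 1) = (a + 1) ^ (H - 1 / 2) := by
      nth_rewrite 2 [← Real.rpow_one (a + 1)]
      rw [← Real.rpow_add (by linarith), show H - 3 / 2 + 1 = H - 1 / 2 by ring]
    have hRS : a ^ (H - 1 / 2) ≤ (a + 1) ^ (H - 1 / 2) :=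
      Real.rpow_le_rpow hapos.le (by linarith) (by linarith)
    have hQpos : (0 : ℝ) < a ^ (5 / 2 - H) := Real.rpow_pos_of_pos hapos _
    have hstep : x * (3 / 2 - H) * (a + 1) <
        (H - 1 / 2) * ((a + 1) ^ (H - 3 / 2) * a ^ (5 / 2 - H)) * (a + 1) := by
      calc x * (3 / 2 - H) * (a + 1) < (H - 1 / 2) * (a * a) := hpoly
        _ = (H - 1 / 2) * (a ^ (5 / 2 - H) * a ^ (H - 1 / 2)) := by rw [eR]
        _ ≤ (H - 1 / 2) * (a ^ (5 / 2 - H) * (a + 1) ^ (H - 1 / 2)) := by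
            apply mul_le_mul_of_nonneg_left _ (by linarith)
            exact mul_le_mul_of_nonneg_left hRS hQpos.le
        _ = (H - 1 / 2) * ((a + 1) ^ (H - 3 / 2) * a ^ (5 / 2 - H)) * (a + 1) := by
            rw [← eS]; ring
    exact lt_of_mul_lt_mul_right hstep (by linarith)
  have hT : (0 : ℝ) < a ^ (H - 5 / 2) := Real.rpow_pos_of_pos hapos _
  have eQT : a ^ (5 / 2 - H) * a ^ (H - 5 / 2) = 1 := by
    rw [← Real.rpow_add hapos]; norm_num
  have key2 : x * (3 / 2 - H) * a ^ (H - 5 / 2) < (H - 1 / 2) * (a + 1) ^ (H - 3 / 2) := by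
    have := mul_lt_mul_of_pos_right key hT
    calc x * (3 / 2 - H) * a ^ (H - 5 / 2) <
        (H - 1 / 2) * ((a + 1) ^ (H - 3 / 2) * a ^ (5 / 2 - H)) * a ^ (H - 5 / 2) := this
      _ = (H - 1 / 2) * (a + 1) ^ (H - 3 / 2) := by
          rw [mul_assoc, mul_assoc, eQT, mul_one]
  have hfin : x * ((3 / 2 - H) * c1 ^ (H - 3 / 2 - 1)) < (H - 1 / 2) * c2 ^ (H - 1 / 2 - 1) := by
    calc x * ((3 / 2 - H) * c1 ^ (H - 3 / 2 - 1)) ≤ x * ((3 / 2 - H) * a ^ (H - 5 / 2)) := by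
          apply mul_le_mul_of_nonneg_left _ hxpos.le
          exact mul_le_mul_of_nonneg_left h2 (by linarith)
      _ = x * (3 / 2 - H) * a ^ (H - 5 / 2) := by ring
      _ < (H - 1 / 2) * (a + 1) ^ (H - 3 / 2) := key2
      _ ≤ (H - 1 / 2) * c2 ^ (H - 1 / 2 - 1) := mul_le_mul_of_nonneg_left h1 (by linarith)
  nlinarith

lemma quad_tendsto (c b d : ℝ) (hc : 0 < c) :
    Tendsto (fun m : ℝ => c * m ^ 2 + b * m + d) atTop atTop := by
  have h1 : Tendsto (fun m : ℝ => c * m + b) atTop atTop :=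
    tendsto_atTop_add_const_right _ b (tendsto_id.const_mul_atTop hc)
  have h2 : Tendsto (fun m : ℝ => m * (c * m + b)) atTop atTop :=
    Tendsto.atTop_mul_atTop₀ tendsto_id h1
  have h3 := tendsto_atTop_add_const_right _ d h2
  exact h3.congr (fun m => by ring)

lemma cast_sub_one_tendsto : Tendsto (fun n : ℕ => (n : ℝ) - 1) atTop atTop := by
  simpa [sub_eq_add_neg] using
    tendsto_atTop_add_const_right atTop (-1 : ℝ) (tendsto_natCast_atTop_atTop (R := ℝ))

/-- Lemma A.1: for each `n > 1` there is a unique `x_n ∈ (0, n-1)` such that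
`g_n(x) = x^{1/2-H} φ_n^H(x)` is strictly decreasing on `(0, x_n)` and strictly increasing on
`(x_n, n-1)`; moreover `x_n / (n-1) → H - 1/2`. -/
theorem statement16 (H : ℝ) (hH : H ∈ Set.Ioo (1 / 2 : ℝ) 1) :
    (∀ n : ℕ, 1 < n → ∃! x : ℝ, x ∈ Set.Ioo (0 : ℝ) ((n : ℝ) - 1) ∧
      StrictAntiOn (gmap H n) (Set.Ioo 0 x) ∧
      StrictMonoOn (gmap H n) (Set.Ioo x ((n : ℝ) - 1))) ∧
    ∀ xn : ℕ → ℝ,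
      (∀ n : ℕ, 1 < n → xn n ∈ Set.Ioo (0 : ℝ) ((n : ℝ) - 1) ∧
        StrictAntiOn (gmap H n) (Set.Ioo 0 (xn n)) ∧
        StrictMonoOn (gmap H n) (Set.Ioo (xn n) ((n : ℝ) - 1))) →
      Tendsto (fun n => xn n / ((n : ℝ) - 1)) atTop (nhds (H - 1 / 2)) := by
  obtain ⟨hH1, hH2⟩ := hH
  have part1 : ∀ n : ℕ, 1 < n → ∃ x : ℝ, (x ∈ Set.Ioo (0 : ℝ) ((n : ℝ) - 1) ∧
      StrictAntiOn (gmap H n) (Set.Ioo 0 x) ∧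
      StrictMonoOn (gmap H n) (Set.Ioo x ((n : ℝ) - 1))) ∧ psiF H n x = 0 := by
    intro n hn
    obtain ⟨r, hr, hroot⟩ := psiF_root H hH1 hH2 n hn
    obtain ⟨ha, hm⟩ := gmap_prop H hH1 hH2 n hr hroot
    exact ⟨r, ⟨hr, ha, hm⟩, hroot⟩
  refine ⟨fun n hn => ?_, fun xn hxn => ?_⟩
  · obtain ⟨r, hrp, _⟩ := part1 n hn
    exact ⟨r, hrp, fun y hy => gmap_uniq H n hy hrp⟩
  · have hroot : ∀ n : ℕ, 1 < n → psiF H n (xn n) = 0 := by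
      intro n hn
      obtain ⟨r, hrp, hr0⟩ := part1 n hn
      rw [gmap_uniq H n (hxn n hn) hrp]; exact hr0
    rw [Metric.tendsto_atTop]
    intro ε hε
    set ε' : ℝ := min (ε / 2) ((H - 1 / 2) / 2) with hε'
    have hε'pos : 0 < ε' := lt_min (by linarith) (by linarith)
    have hε'le : ε' ≤ ε / 2 := min_le_left _ _
    have hε'H : ε' ≤ (H - 1 / 2) / 2 := min_le_right _ _
    set tp : ℝ := H - 1 / 2 + ε' with htp
    set tm : ℝ := H - 1 / 2 - ε' with htm
    have htp1 : tp < 1 := by rw [htp]; linarith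
    have htp0 : 0 < tp := by rw [htp]; linarith
    have htm0 : 0 < tm := by rw [htm]; linarith
    have htm1 : tm < 1 := by rw [htm]; linarith
    have hcp : (0 : ℝ) < (1 - tp) * (tp - (H - 1 / 2)) := by
      apply mul_pos (by linarith); rw [htp]; linarith
    have hcm : (0 : ℝ) < (1 - tm) * ((H - 1 / 2) - tm) := by
      apply mul_pos (by linarith); rw [htm]; linarith
    have hq1 : Tendsto (fun m : ℝ => m * tp * (3 / 2 - H) * (m * (1 - tp)) -
        (H - 1 / 2) * ((m * (1 - tp) + 1) * (m * (1 - tp) + 1))) atTop atTop := by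
      refine (quad_tendsto ((1 - tp) * (tp - (H - 1 / 2)))
        (-(H - 1 / 2) * 2 * (1 - tp)) (-(H - 1 / 2)) hcp).congr (fun m => by ring)
    have hq2 : Tendsto (fun m : ℝ => (H - 1 / 2) * (m * (1 - tm) * (m * (1 - tm))) -
        m * tm * (3 / 2 - H) * (m * (1 - tm) + 1)) atTop atTop := by
      refine (quad_tendsto ((1 - tm) * ((H - 1 / 2) - tm))
        (-(tm * (3 / 2 - H))) 0 hcm).congr (fun m => by ring)
    have h1 := cast_sub_one_tendsto.eventually (hq1.eventually_gt_atTop 0)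
    have h2 := cast_sub_one_tendsto.eventually (hq2.eventually_gt_atTop 0)
    have h3 : ∀ᶠ n : ℕ in atTop, 2 ≤ n := eventually_ge_atTop 2
    obtain ⟨N, hN⟩ := eventually_atTop.1 ((h1.and h2).and h3)
    refine ⟨N, fun n hn => ?_⟩
    obtain ⟨⟨hpolyp, hpolym⟩, hn2⟩ := hN n hn
    have hn1 : 1 < n := hn2
    have hm1 : (1 : ℝ) ≤ (n : ℝ) - 1 := by
      have : (2 : ℝ) ≤ (n : ℝ) := by exact_mod_cast hn2
      linarith
    set m : ℝ := (n : ℝ) - 1 with hmm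
    have hm0 : 0 < m := by linarith
    have hx := (hxn n hn1).1
    have hψ0 := hroot n hn1
    have hmono := strictMonoOn_psiF H hH1 hH2 n
    -- upper bound
    have hposP : 0 < psiF H n (m * tp) := by
      apply psiF_pos_of_poly H hH1 hH2 n (m * tp) (m * (1 - tp))
        (by rw [hmm]; ring) (mul_pos hm0 (by linarith)) (mul_pos hm0 htp0)
      linarith [hpolyp]
    have hnegM : psiF H n (m * tm) < 0 := by
      apply psiF_neg_of_poly H hH1 hH2 n (m * tm) (m * (1 - tm))
        (by rw [hmm]; ring) (mul_pos hm0 (by linarith)) (mul_pos hm0 htm0)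
      linarith [hpolym]
    have hmemP : m * tp ∈ Set.Ico (0 : ℝ) m :=
      ⟨by positivity, by have := mul_lt_mul_of_pos_left htp1 hm0; linarith⟩
    have hmemM : m * tm ∈ Set.Ico (0 : ℝ) m :=
      ⟨by positivity, by have := mul_lt_mul_of_pos_left htm1 hm0; linarith⟩
    have hmemX : xn n ∈ Set.Ico (0 : ℝ) m := ⟨hx.1.le, hx.2⟩
    have hub : xn n < m * tp := by
      rcases lt_trichotomy (xn n) (m * tp) with h | h | h
      · exact h
      · exfalso; rw [← h] at hposP; linarith
      · exfalso; have := hmono hmemP hmemX h; linarith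
    have hlb : m * tm < xn n := by
      rcases lt_trichotomy (m * tm) (xn n) with h | h | h
      · exact h
      · exfalso; rw [h] at hnegM; linarith
      · exfalso; have := hmono hmemX hmemM h; linarith
    have hub' : xn n / m < tp := (div_lt_iff₀ hm0).2 (by linarith)
    have hlb' : tm < xn n / m := (lt_div_iff₀ hm0).2 (by linarith)
    rw [Real.dist_eq, abs_lt]
    constructor
    · rw [htm] at hlb'; linarith
    · rw [htp] at hub'; linarith

end
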